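/- Let I ⊆ (0,∞) be a nondegenerate open interval, λ ∈ ℝ, and f : I → ℝ twice differentiable. Then the system f''(r) + f'(r)/r = 2λ and f'(r)/r = λ for all r ∈ I holds if and only if there exists a constant c_2 ∈ ℝ such that f(r) = (λ/2)·r² + c_2 for all r ∈ I. -/

import Mathlib

/-- Analytic core of Proposition 6.1 of the paper: on a nondegenerate open
interval `I ⊆ (0,∞)`, a twice differentiable `f` satisfies
`f'' + f'/r = 2λ` and `f'/r = λ` on `I` iff `f(r) = (λ/2)r² + c₂` on `I`
for some constant `c₂`. -/
theorem stmt_16 (I : Set ℝ) (hIopen : IsOpen I) (hIconn : I.OrdConnected)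
    (hIsub : I ⊆ Set.Ioi (0 : ℝ)) (hInt : I.Nontrivial)
    (lam : ℝ) (f : ℝ → ℝ)
    (hf : ∀ r ∈ I, DifferentiableAt ℝ f r)
    (hf' : ∀ r ∈ I, DifferentiableAt ℝ (deriv f) r) :
    (∀ r ∈ I, deriv (deriv f) r + deriv f r / r = 2 * lam ∧ deriv f r / r = lam) ↔
    (∃ c₂ : ℝ, ∀ r ∈ I, f r = lam / 2 * r ^ 2 + c₂) := by
  constructor
  · intro h
    obtain ⟨x₀, hx₀, -, -⟩ := hInt
    set g : ℝ → ℝ := fun r => f r - lam / 2 * r ^ 2 with hg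
    have hgderiv : ∀ z ∈ I, HasDerivAt g 0 z := by
      intro z hz
      have hzpos : (0 : ℝ) < z := hIsub hz
      have hdz : deriv f z = lam * z := by
        have := (h z hz).2
        field_simp at this
        linarith [this]
      have h1 : HasDerivAt f (lam * z) z := by
        rw [← hdz]; exact (hf z hz).hasDerivAt
      have h2 : HasDerivAt (fun r : ℝ => lam / 2 * r ^ 2) (lam / 2 * (2 * z)) z := by
        have := (hasDerivAt_pow 2 z).const_mul (lam / 2)
        simpa using this
      have : HasDerivAt g (lam * z - lam / 2 * (2 * z)) z := h1.sub h2
      convert this using 1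
      ring
    have hconv : Convex ℝ I := hIconn.convex
    refine ⟨g x₀, fun r hr => ?_⟩
    have hconst : g r = g x₀ := by
      apply hconv.is_const_of_fderivWithin_eq_zero
        (fun z hz => ((hgderiv z hz).differentiableAt).differentiableWithinAt)
        (fun z hz => ?_) hr hx₀
      rw [fderivWithin_of_isOpen hIopen hz]
      have := (hgderiv z hz).hasFDerivAt.fderiv
      rw [this]
      ext; simp
    have : f r - lam / 2 * r ^ 2 = g x₀ := hconst
    linarith [this]
  · rintro ⟨c₂, hc⟩
    intro r hr
    have hrpos : (0 : ℝ) < r := hIsub hr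
    have heq : f =ᶠ[nhds r] fun x => lam / 2 * x ^ 2 + c₂ :=
      Filter.eventually_iff_exists_mem.2 ⟨I, hIopen.mem_nhds hr, hc⟩
    have hderiv_g : deriv (fun x : ℝ => lam / 2 * x ^ 2 + c₂) = fun x => lam * x := by
      ext x
      have h2 : HasDerivAt (fun x : ℝ => lam / 2 * x ^ 2 + c₂) (lam / 2 * (2 * x)) x := by
        have := ((hasDerivAt_pow 2 x).const_mul (lam / 2)).add_const c₂
        simpa using this
      rw [h2.deriv]; ring
    have hd1 : deriv f =ᶠ[nhds r] fun x => lam * x := by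
      have := heq.deriv
      rw [hderiv_g] at this
      exact this
    have hd1r : deriv f r = lam * r := hd1.eq_of_nhds
    have hd2 : deriv (deriv f) r = lam := by
      have := hd1.deriv.eq_of_nhds
      rw [this, deriv_const_mul_field]
      simp
    constructor
    · rw [hd2, hd1r]
      field_simp
      ring
    · rw [hd1r]
      field_simp
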